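/- Let H ∈ ℝ^{(ℓ+1)×ℓ}, let V_{ℓ} ∈ ℝ^{n×ℓ} and V_{ℓ+1} ∈ ℝ^{n×(ℓ+1)} have orthonormal columns (V_{ℓ+1}* V_{ℓ+1} = I), and define T := V_{ℓ+1} H V_{ℓ}*. Then for every α > 0, (T*T + αI_n)^{-1} V_{ℓ} = V_{ℓ} (H*H + αI_ℓ)^{-1}. -/
import Mathlib

open Matrix in
/-- Let `H ∈ ℝ^{(ℓ+1)×ℓ}`, `Vℓ₊₁ ∈ ℝ^{n×(ℓ+1)}` with orthonormal columns, `Vℓ` its first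
`ℓ` columns, and `T := Vℓ₊₁ H Vℓᵀ`.  Then for `α > 0`,
`(TᵀT + αIₙ)⁻¹ Vℓ = Vℓ (HᵀH + αI_ℓ)⁻¹`. -/
theorem arnoldi_tikhonov_inverse_commute
    (n ℓ : ℕ) (hn : 0 < n) (hℓ : 0 < ℓ) (hle : ℓ ≤ n)
    (V : Matrix (Fin n) (Fin (ℓ + 1)) ℝ) (hV : Vᵀ * V = 1)
    (H : Matrix (Fin (ℓ + 1)) (Fin ℓ) ℝ) (α : ℝ) (hα : 0 < α) :
    letI Vℓ : Matrix (Fin n) (Fin ℓ) ℝ := V.submatrix id Fin.castSucc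
    letI T : Matrix (Fin n) (Fin n) ℝ := V * H * Vℓᵀ
    (Tᵀ * T + α • 1)⁻¹ * Vℓ = Vℓ * (Hᵀ * H + α • 1)⁻¹ := by
  set Vℓ : Matrix (Fin n) (Fin ℓ) ℝ := V.submatrix id Fin.castSucc with hVdef
  set T : Matrix (Fin n) (Fin n) ℝ := V * H * Vℓᵀ with hTdef
  -- orthonormality of Vℓ
  have hVℓ : Vℓᵀ * Vℓ = 1 := by
    ext i j
    have := congrFun (congrFun hV i.castSucc) j.castSucc
    simpa [Vℓ, Matrix.mul_apply, Matrix.one_apply, Fin.castSucc_inj] using this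
  -- positive definiteness of α • 1
  have hsmul : ∀ (m : ℕ), ((α • 1 : Matrix (Fin m) (Fin m) ℝ)).PosDef := by
    intro m
    have : (α • (1 : Matrix (Fin m) (Fin m) ℝ)) = Matrix.diagonal (fun _ => α) := by
      simp [Matrix.smul_one_eq_diagonal]
    rw [this]
    exact Matrix.posDef_diagonal_iff.mpr (fun _ => hα)
  -- invertibility
  have hApos : (Tᵀ * T + α • 1).PosDef := by
    have : (Tᵀ * T).PosSemidef := by
      have := Matrix.posSemidef_conjTranspose_mul_self T
      simpa [Matrix.conjTranspose_eq_transpose_of_trivial] using this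
    exact Matrix.PosDef.posSemidef_add this (hsmul n)
  have hBpos : (Hᵀ * H + α • 1).PosDef := by
    have : (Hᵀ * H).PosSemidef := by
      have := Matrix.posSemidef_conjTranspose_mul_self H
      simpa [Matrix.conjTranspose_eq_transpose_of_trivial] using this
    exact Matrix.PosDef.posSemidef_add this (hsmul ℓ)
  have hA : IsUnit (Tᵀ * T + α • 1) := hApos.isUnit
  have hB : IsUnit (Hᵀ * H + α • 1) := hBpos.isUnit
  -- key identity
  have hTT : Tᵀ * T = Vℓ * (Hᵀ * H) * Vℓᵀ := by
    have hT : Tᵀ = Vℓ * Hᵀ * Vᵀ := by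
      simp [T, Matrix.transpose_mul, Matrix.mul_assoc]
    rw [hT]
    simp only [T]
    calc Vℓ * Hᵀ * Vᵀ * (V * H * Vℓᵀ)
        = Vℓ * Hᵀ * (Vᵀ * V) * H * Vℓᵀ := by
          simp only [Matrix.mul_assoc]
      _ = Vℓ * (Hᵀ * H) * Vℓᵀ := by
          rw [hV]
          simp only [Matrix.mul_one, Matrix.mul_assoc]
  have key : (Tᵀ * T + α • 1) * (Vℓ * (Hᵀ * H + α • 1)⁻¹) = Vℓ := by
    have : (Tᵀ * T + α • 1) * Vℓ = Vℓ * (Hᵀ * H + α • 1) := by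
      rw [hTT, Matrix.add_mul, Matrix.mul_add]
      congr 1
      · rw [Matrix.mul_assoc, Matrix.mul_assoc, hVℓ, Matrix.mul_one]
      · rw [Matrix.smul_mul, Matrix.mul_smul, Matrix.one_mul, Matrix.mul_one]
    rw [← Matrix.mul_assoc, this, Matrix.mul_assoc,
      Matrix.mul_nonsing_inv _ (Matrix.isUnit_iff_isUnit_det _ |>.mp hB), Matrix.mul_one]
  calc (Tᵀ * T + α • 1)⁻¹ * Vℓ
      = (Tᵀ * T + α • 1)⁻¹ * ((Tᵀ * T + α • 1) * (Vℓ * (Hᵀ * H + α • 1)⁻¹)) := by rw [key]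
    _ = Vℓ * (Hᵀ * H + α • 1)⁻¹ := by
        rw [← Matrix.mul_assoc,
          Matrix.nonsing_inv_mul _ (Matrix.isUnit_iff_isUnit_det _ |>.mp hA), Matrix.one_mul]
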